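/- Let K, L, N, M be positive integers and let A_0, …, A_{2K−1} be complex L×N matrices. For x ∈ ℝ^{2K} set S(x) = Σ_{k=0}^{K−1} (x_{2k}·A_{2k} + x_{2k+1}·A_{2k+1}) and T_k(x) = x_{2k}·A_{2k} + x_{2k+1}·A_{2k+1}. Then the identity ‖V − S(x)·H‖² = Σ_{k=0}^{K−1} ‖V − T_k(x)·H‖² − (K−1)·‖V‖² holds for all V ∈ ℂ^{L×M}, all H ∈ ℂ^{N×M} and all x ∈ ℝ^{2K} if and only if Aᴴ_k·A_l + Aᴴ_l·A_k = 0 for every pair of indices 0 ≤ k ≠ l ≤ 2K−1 except the pairs of the form {k, l} = {2m, 2m+1} with 0 ≤ m ≤ K−1. -/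

import Mathlib

open Matrix Finset

/-- Squared Frobenius norm of a complex matrix. -/
noncomputable def frobSq {m n : Type*} [Fintype m] [Fintype n] (M : Matrix m n ℂ) : ℝ :=
  ∑ i, ∑ j, ‖M i j‖ ^ 2

noncomputable def ip {m n : Type*} [Fintype m] [Fintype n] (A B : Matrix m n ℂ) : ℝ :=
  ∑ i, ∑ j, ((starRingEnd ℂ) (A i j) * B i j).re

section basic
variable {m n : Type*} [Fintype m] [Fintype n]

lemma frobSq_eq_ip (A : Matrix m n ℂ) : frobSq A = ip A A := by
  unfold frobSq ip
  refine Finset.sum_congr rfl fun i _ => Finset.sum_congr rfl fun j _ => ?_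
  rw [Complex.sq_norm, ← Complex.normSq_eq_conj_mul_self]
  simp [Complex.normSq]

lemma ip_symm (A B : Matrix m n ℂ) : ip A B = ip B A := by
  unfold ip
  refine Finset.sum_congr rfl fun i _ => Finset.sum_congr rfl fun j _ => ?_
  have h : (starRingEnd ℂ) (B i j) * (A i j)
      = (starRingEnd ℂ) ((starRingEnd ℂ) (A i j) * (B i j)) := by
    rw [_root_.map_mul]; simp [mul_comm]
  rw [h, Complex.conj_re]

lemma ip_add_right (A B C : Matrix m n ℂ) : ip A (B + C) = ip A B + ip A C := by
  unfold ip
  simp [mul_add, Complex.add_re, Finset.sum_add_distrib]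

lemma ip_eq_trace (A B : Matrix m n ℂ) : ip A B = (Matrix.trace (Aᴴ * B)).re := by
  unfold ip
  rw [Matrix.trace]
  simp only [Matrix.diag, Matrix.mul_apply, Matrix.conjTranspose_apply, Complex.re_sum,
    starRingEnd_apply]
  rw [Finset.sum_comm]

lemma ip_sum_right {ι : Type*} (s : Finset ι) (A : Matrix m n ℂ) (T : ι → Matrix m n ℂ) :
    ip A (∑ k ∈ s, T k) = ∑ k ∈ s, ip A (T k) := by
  classical
  induction s using Finset.induction_on with
  | empty => simp [ip]
  | insert _ _ h ih => simp [Finset.sum_insert h, ip_add_right, ih]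

lemma ip_sum_left {ι : Type*} (s : Finset ι) (A : Matrix m n ℂ) (T : ι → Matrix m n ℂ) :
    ip (∑ k ∈ s, T k) A = ∑ k ∈ s, ip (T k) A := by
  rw [ip_symm, ip_sum_right]
  exact Finset.sum_congr rfl fun k _ => ip_symm _ _

lemma frobSq_sub (V W : Matrix m n ℂ) :
    frobSq (V - W) = frobSq V - 2 * ip V W + frobSq W := by
  unfold frobSq ip
  have h : ∀ i j, ‖(V - W) i j‖ ^ 2
      = ‖V i j‖ ^ 2 - 2 * ((starRingEnd ℂ) (V i j) * W i j).re
        + ‖W i j‖ ^ 2 := by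
    intro i j
    simp only [Matrix.sub_apply, Complex.sq_norm, Complex.normSq_apply, Complex.sub_re,
      Complex.sub_im, Complex.mul_re, Complex.conj_re, Complex.conj_im]
    ring
  simp only [h, Finset.sum_add_distrib, Finset.sum_sub_distrib, Finset.mul_sum]

lemma frobSq_add (V W : Matrix m n ℂ) :
    frobSq (V + W) = frobSq V + 2 * ip V W + frobSq W := by
  unfold frobSq ip
  have h : ∀ i j, ‖(V + W) i j‖ ^ 2
      = ‖V i j‖ ^ 2 + 2 * ((starRingEnd ℂ) (V i j) * W i j).re
        + ‖W i j‖ ^ 2 := by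
    intro i j
    simp only [Matrix.add_apply, Complex.sq_norm, Complex.normSq_apply, Complex.add_re,
      Complex.add_im, Complex.mul_re, Complex.conj_re, Complex.conj_im]
    ring
  simp only [h, Finset.sum_add_distrib, Finset.mul_sum]

lemma frobSq_sum {ι : Type*} (s : Finset ι) (T : ι → Matrix m n ℂ) :
    frobSq (∑ k ∈ s, T k) = ∑ k ∈ s, ∑ l ∈ s, ip (T k) (T l) := by
  rw [frobSq_eq_ip, ip_sum_left]
  exact Finset.sum_congr rfl fun k _ => ip_sum_right _ _ _

lemma frobSq_zero : frobSq (0 : Matrix m n ℂ) = 0 := by simp [frobSq]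

end basic

lemma ip_mul_eq_zero {L N M : Type*} [Fintype L] [Fintype N] [Fintype M]
    (P Q : Matrix L N ℂ) (H : Matrix N M ℂ) (h : Pᴴ * Q + Qᴴ * P = 0) :
    ip (P * H) (Q * H) = 0 := by
  have h2 : ip (P * H) (Q * H) + ip (Q * H) (P * H) = 0 := by
    rw [ip_eq_trace, ip_eq_trace, ← Complex.add_re, ← Matrix.trace_add]
    have e : (P * H)ᴴ * (Q * H) + (Q * H)ᴴ * (P * H) = Hᴴ * ((Pᴴ * Q + Qᴴ * P) * H) := by
      simp only [Matrix.conjTranspose_mul, Matrix.add_mul, Matrix.mul_add, Matrix.mul_assoc]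
    rw [e, h, Matrix.zero_mul, Matrix.mul_zero, Matrix.trace_zero, Complex.zero_re]
  have hs := ip_symm (P * H) (Q * H)
  linarith

lemma herm_quad_zero {N' : ℕ} (B : Matrix (Fin N') (Fin N') ℂ) (hB : Bᴴ = B)
    (h : ∀ u : Fin N' → ℂ, (∑ i, ∑ j, (starRingEnd ℂ) (u i) * B i j * u j).re = 0) :
    B = 0 := by
  have hherm : ∀ p q, B q p = (starRingEnd ℂ) (B p q) := by
    intro p q
    have := congrFun (congrFun hB q) p
    rw [Matrix.conjTranspose_apply] at this
    exact this.symm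
  have hdiag : ∀ p, B p p = 0 := by
    intro p
    have h1 := h (fun i => if i = p then 1 else 0)
    simp only [apply_ite (starRingEnd ℂ), _root_.map_one, _root_.map_zero, ite_mul, mul_ite,
      one_mul, mul_one, zero_mul, mul_zero, Finset.sum_ite_eq', Finset.mem_univ,
      if_true] at h1
    have h2 := hherm p p
    rw [Complex.ext_iff]
    constructor
    · simpa using h1
    · have := Complex.conj_eq_iff_im.mp h2.symm
      simpa using this
  ext p q
  by_cases hpq : p = q
  · subst hpq; simpa using hdiag p
  · have key : ∀ a b : ℂ,
        ((starRingEnd ℂ) a * B p q * b + (starRingEnd ℂ) b * B q p * a).re = 0 := by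
      intro a b
      have h1 := h (fun i => (if i = p then a else 0) + (if i = q then b else 0))
      simp only [_root_.map_add, apply_ite (starRingEnd ℂ), _root_.map_zero, add_mul,
        mul_add, ite_mul, mul_ite, zero_mul, mul_zero, Finset.sum_add_distrib,
        Finset.sum_ite_eq', Finset.mem_univ, if_true, hdiag, add_zero, zero_add] at h1
      rw [← h1]
      congr 1
      ring
    have k1 := key 1 1
    have k2 := key 1 Complex.I
    have hq := hherm p q
    simp only [_root_.map_one, one_mul, mul_one] at k1 k2
    rw [hq] at k1 k2
    have e1 : (B p q).re = 0 := by
      have := k1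
      simp [Complex.add_re, Complex.conj_re] at this
      linarith
    have e2 : (B p q).im = 0 := by
      have := k2
      simp [Complex.add_re, Complex.mul_re, Complex.mul_im, Complex.conj_re,
        Complex.conj_im, Complex.I_re, Complex.I_im] at this
      linarith
    simp [Complex.ext_iff, e1, e2]

lemma trace_col_rep {N M : ℕ} (X : Matrix (Fin N) (Fin N) ℂ) (u : Fin N → ℂ) :
    Matrix.trace ((Matrix.of (fun i (_ : Fin M) => u i))ᴴ * X
        * Matrix.of (fun i (_ : Fin M) => u i))
      = (M : ℂ) * ∑ i, ∑ j, (starRingEnd ℂ) (u i) * X i j * u j := by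
  rw [Matrix.trace]
  simp only [Matrix.diag, Matrix.mul_apply, Matrix.conjTranspose_apply, Matrix.of_apply,
    Finset.sum_mul, starRingEnd_apply]
  rw [Finset.sum_const, Finset.card_univ, Fintype.card_fin, nsmul_eq_mul]
  congr 1
  rw [Finset.sum_comm]

/-- Single-symbol decodability characterization for general linear designs:
the ML metric decomposes into single-variable terms iff all weight matrices
`A k`, `A l` with `k / 2 ≠ l / 2` (i.e. not attached to the same complex
variable) satisfy `Aᴴₖ Aₗ + Aᴴₗ Aₖ = 0`. -/
theorem single_symbol_decodable_characterization
    (K L N M : ℕ) (hK : 0 < K) (hL : 0 < L) (hN : 0 < N) (hM : 0 < M)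
    (A : ℕ → Matrix (Fin L) (Fin N) ℂ) :
    (∀ (V : Matrix (Fin L) (Fin M) ℂ) (H : Matrix (Fin N) (Fin M) ℂ) (x : ℕ → ℝ),
      frobSq (V - (∑ k ∈ Finset.range K,
          ((x (2*k) : ℂ) • A (2*k) + (x (2*k+1) : ℂ) • A (2*k+1))) * H)
        = (∑ k ∈ Finset.range K,
            frobSq (V - ((x (2*k) : ℂ) • A (2*k) + (x (2*k+1) : ℂ) • A (2*k+1)) * H))
          - ((K : ℝ) - 1) * frobSq V)
    ↔ (∀ k l, k < 2*K → l < 2*K → k / 2 ≠ l / 2 →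
        (A k)ᴴ * A l + (A l)ᴴ * A k = 0) := by
  constructor
  · intro hid k l hk hl hkl
    set B : Matrix (Fin N) (Fin N) ℂ := (A k)ᴴ * A l + (A l)ᴴ * A k with hBdef
    have hB : Bᴴ = B := by
      simp [hBdef, Matrix.conjTranspose_add, Matrix.conjTranspose_mul, add_comm]
    -- Step 1
    have step1 : ∀ H : Matrix (Fin N) (Fin M) ℂ, ip (A k * H) (A l * H) = 0 := by
      intro H
      set x : ℕ → ℝ := fun j => if j = k then 1 else if j = l then 1 else 0 with hxdef
      set f : ℕ → Matrix (Fin L) (Fin N) ℂ :=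
        fun m => ((x (2*m) : ℂ) • A (2*m) + ((x (2*m+1) : ℝ) : ℂ) • A (2*m+1)) with hfdef
      have hf0 : ∀ᵉ (m), m ≠ k/2 → m ≠ l/2 → f m = 0 := by
        intro m h1 h2
        have e1 : (2*m ≠ k) ∧ (2*m ≠ l) ∧ (2*m+1 ≠ k) ∧ (2*m+1 ≠ l) := by omega
        simp [hfdef, hxdef, e1.1, e1.2.1, e1.2.2.1, e1.2.2.2]
      have hfk' : f (k/2) = A k := by
        rcases Nat.mod_two_eq_zero_or_one k with h2 | h2
        · have e1 : 2*(k/2) = k := by omega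
          have e2 : 2*(k/2)+1 ≠ k := by omega
          have e3 : 2*(k/2)+1 ≠ l := by omega
          have e4 : k+1 ≠ l := by omega
          have e5 : k+1 ≠ k := by omega
          simp [hfdef, hxdef, e1, e2, e3, e4, e5]
        · have e1 : 2*(k/2)+1 = k := by omega
          have e2 : 2*(k/2) ≠ k := by omega
          have e3 : 2*(k/2) ≠ l := by omega
          simp [hfdef, hxdef, e1, e2, e3]
      have hfl' : f (l/2) = A l := by
        rcases Nat.mod_two_eq_zero_or_one l with h2 | h2
        · have e1 : 2*(l/2) = l := by omega
          have e2 : 2*(l/2) ≠ k := by omega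
          have e3 : 2*(l/2)+1 ≠ k := by omega
          have e4 : 2*(l/2)+1 ≠ l := by omega
          have e5 : l+1 ≠ k := by omega
          have e6 : l+1 ≠ l := by omega
          simp [hfdef, hxdef, e1, e2, e3, e4, e5, e6]
        · have e1 : 2*(l/2)+1 = l := by omega
          have e2 : 2*(l/2) ≠ k := by omega
          have e3 : 2*(l/2) ≠ l := by omega
          have e4 : 2*(l/2)+1 ≠ k := by omega
          simp [hfdef, hxdef, e1, e2, e3, e4]
      have hne : k/2 ≠ l/2 := hkl
      have hsub : ({k/2, l/2} : Finset ℕ) ⊆ Finset.range K := by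
        intro m hm
        simp only [Finset.mem_insert, Finset.mem_singleton] at hm
        rcases hm with rfl | rfl <;> simp only [Finset.mem_range] <;> omega
      have hz1 : ∀ m ∈ Finset.range K, m ∉ ({k/2, l/2} : Finset ℕ) → f m = 0 := by
        intro m _ hm
        simp only [Finset.mem_insert, Finset.mem_singleton] at hm
        push_neg at hm
        exact hf0 m hm.1 hm.2
      have hS : (∑ m ∈ Finset.range K, f m) = A k + A l := by
        rw [← Finset.sum_subset hsub hz1]
        rw [Finset.sum_pair hne, hfk', hfl']
      have hz2 : ∀ m ∈ Finset.range K, m ∉ ({k/2, l/2} : Finset ℕ) →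
          frobSq ((0 : Matrix (Fin L) (Fin M) ℂ) - f m * H) = 0 := by
        intro m hmK hm
        rw [hz1 m hmK hm]
        simp [frobSq_zero]
      have hsum2 : (∑ m ∈ Finset.range K, frobSq ((0 : Matrix (Fin L) (Fin M) ℂ) - f m * H))
          = frobSq (A k * H) + frobSq (A l * H) := by
        rw [← Finset.sum_subset hsub hz2]
        rw [Finset.sum_pair hne, hfk', hfl']
        have : ∀ W : Matrix (Fin L) (Fin M) ℂ, frobSq (0 - W) = frobSq W := by
          intro W
          rw [frobSq_sub, frobSq_zero]
          have : ip (0 : Matrix (Fin L) (Fin M) ℂ) W = 0 := by simp [ip]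
          rw [this]; ring
        rw [this, this]
      have hx := hid 0 H x
      rw [hS] at hx
      rw [hsum2] at hx
      rw [frobSq_zero] at hx
      have hz : ∀ W : Matrix (Fin L) (Fin M) ℂ, frobSq (0 - W) = frobSq W := by
        intro W
        rw [frobSq_sub, frobSq_zero]
        have : ip (0 : Matrix (Fin L) (Fin M) ℂ) W = 0 := by simp [ip]
        rw [this]; ring
      rw [hz] at hx
      rw [Matrix.add_mul, frobSq_add] at hx
      linarith
    -- Step 2
    have hquad : ∀ u : Fin N → ℂ,
        (∑ i, ∑ j, (starRingEnd ℂ) (u i) * B i j * u j).re = 0 := by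
      intro u
      set H : Matrix (Fin N) (Fin M) ℂ := Matrix.of (fun i _ => u i) with hH
      have t1 : ip (A k * H) (A l * H) = 0 := step1 H
      have t2 : ip (A l * H) (A k * H) = 0 := by rw [ip_symm]; exact t1
      have tr0 : (Matrix.trace (Hᴴ * B * H)).re = 0 := by
        have e : Hᴴ * B * H = (A k * H)ᴴ * (A l * H) + (A l * H)ᴴ * (A k * H) := by
          rw [hBdef]
          simp only [Matrix.conjTranspose_mul, Matrix.mul_add, Matrix.add_mul,
            Matrix.mul_assoc]
        rw [e, Matrix.trace_add, Complex.add_re, ← ip_eq_trace, ← ip_eq_trace, t1, t2]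
        norm_num
      rw [trace_col_rep B u] at tr0
      simp only [Complex.mul_re, Complex.ofReal_re, Complex.natCast_re, Complex.natCast_im,
        Complex.ofReal_im, zero_mul, sub_zero] at tr0
      have hM' : (0 : ℝ) < (M : ℝ) := by exact_mod_cast hM
      rcases mul_eq_zero.mp tr0 with h | h
      · exact absurd h hM'.ne'
      · exact h
    exact herm_quad_zero B hB hquad
  · intro hc V H x
    set T : ℕ → Matrix (Fin L) (Fin M) ℂ :=
      fun m => ((x (2*m) : ℂ) • A (2*m) + ((x (2*m+1) : ℝ) : ℂ) • A (2*m+1)) * H with hT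
    have hS : (∑ m ∈ Finset.range K,
        ((x (2*m) : ℂ) • A (2*m) + ((x (2*m+1) : ℝ) : ℂ) • A (2*m+1))) * H
          = ∑ m ∈ Finset.range K, T m := by
      rw [Matrix.sum_mul]
    have hoff : ∀ m ∈ Finset.range K, ∀ n ∈ Finset.range K, m ≠ n →
        ip (T m) (T n) = 0 := by
      intro m hm n hn hmn
      rw [Finset.mem_range] at hm hn
      apply ip_mul_eq_zero
      have h1 := hc (2*m) (2*n) (by omega) (by omega) (by omega)
      have h2 := hc (2*m) (2*n+1) (by omega) (by omega) (by omega)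
      have h3 := hc (2*m+1) (2*n) (by omega) (by omega) (by omega)
      have h4 := hc (2*m+1) (2*n+1) (by omega) (by omega) (by omega)
      have e : ((x (2*m) : ℂ) • A (2*m) + ((x (2*m+1) : ℝ) : ℂ) • A (2*m+1))ᴴ
            * ((x (2*n) : ℂ) • A (2*n) + ((x (2*n+1) : ℝ) : ℂ) • A (2*n+1))
          + ((x (2*n) : ℂ) • A (2*n) + ((x (2*n+1) : ℝ) : ℂ) • A (2*n+1))ᴴ
            * ((x (2*m) : ℂ) • A (2*m) + ((x (2*m+1) : ℝ) : ℂ) • A (2*m+1))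
          = ((x (2*m) : ℂ) * (x (2*n) : ℂ)) • ((A (2*m))ᴴ * A (2*n) + (A (2*n))ᴴ * A (2*m))
          + ((x (2*m) : ℂ) * (x (2*n+1) : ℂ)) • ((A (2*m))ᴴ * A (2*n+1) + (A (2*n+1))ᴴ * A (2*m))
          + ((x (2*m+1) : ℂ) * (x (2*n) : ℂ)) • ((A (2*m+1))ᴴ * A (2*n) + (A (2*n))ᴴ * A (2*m+1))
          + ((x (2*m+1) : ℂ) * (x (2*n+1) : ℂ)) • ((A (2*m+1))ᴴ * A (2*n+1) + (A (2*n+1))ᴴ * A (2*m+1)) := by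
        simp only [Matrix.conjTranspose_add, Matrix.conjTranspose_smul, Complex.star_def,
          Complex.conj_ofReal, Matrix.add_mul, Matrix.mul_add, Matrix.smul_mul,
          Matrix.mul_smul, smul_smul, smul_add]
        module
      rw [e, h1, h2, h3, h4]
      simp
    rw [hS, frobSq_sub, ip_sum_right, frobSq_sum]
    have hdg : ∑ m ∈ Finset.range K, ∑ n ∈ Finset.range K, ip (T m) (T n)
        = ∑ m ∈ Finset.range K, ip (T m) (T m) := by
      refine Finset.sum_congr rfl fun m hm => ?_
      exact Finset.sum_eq_single_of_mem m hm (fun n hn hnm => hoff m hm n hn (Ne.symm hnm))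
    rw [hdg]
    have hterm : ∀ m, frobSq (V - T m) = frobSq V - 2 * ip V (T m) + ip (T m) (T m) := by
      intro m
      rw [frobSq_sub, frobSq_eq_ip (T m)]
    simp only [show ∀ m, frobSq (V - ((x (2*m) : ℂ) • A (2*m) + (x (2*m+1) : ℂ) • A (2*m+1)) * H)
        = frobSq V - 2 * ip V (T m) + ip (T m) (T m) from hterm]
    rw [Finset.sum_add_distrib, Finset.sum_sub_distrib, Finset.sum_const, Finset.card_range,
      nsmul_eq_mul, ← Finset.mul_sum]
    ring
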